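/- Let R′ be an n⁴ complex array which is of real type II with respect to an involution σ of {1,…,n}, or of antireal type II with respect to σ. Then the braided vector algebra V(R′,R) admits a (necessarily unique) star structure * satisfying (v^i)* = v^{σ(i)} for all i = 1,…,n. -/
import Mathlib


open scoped ComplexConjugate

noncomputable section

/-- An n⁴ array `R^i{}_j{}^k{}_l` viewed as an n²×n² matrix with row index `(i,k)`,
column index `(j,l)`. -/
def toMat (n : ℕ) (R : Fin n → Fin n → Fin n → Fin n → ℂ) :
    Matrix (Fin n × Fin n) (Fin n × Fin n) ℂ :=
  Matrix.of fun p q => R p.1 q.1 p.2 q.2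

/-- Entries `(R⁻¹)^i{}_j{}^k{}_l` of the matrix inverse of `R`. -/
def invEntry (n : ℕ) (R : Fin n → Fin n → Fin n → Fin n → ℂ)
    (i j k l : Fin n) : ℂ :=
  (toMat n R)⁻¹ (i, k) (j, l)

/-- `R` is of real type I: `conj (R^i{}_j{}^k{}_l) = R^l{}_k{}^j{}_i`. -/
def RealTypeI (n : ℕ) (R : Fin n → Fin n → Fin n → Fin n → ℂ) : Prop :=
  ∀ i j k l, conj (R i j k l) = R l k j i

/-- `R` is of antireal type I: `R` invertible and
`conj (R^i{}_j{}^k{}_l) = (R⁻¹)^j{}_i{}^l{}_k`. -/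
def AntirealTypeI (n : ℕ) (R : Fin n → Fin n → Fin n → Fin n → ℂ) : Prop :=
  IsUnit (toMat n R) ∧ ∀ i j k l, conj (R i j k l) = invEntry n R j i l k

/-- `R` is of real type II w.r.t. the involution `σ`:
`conj (R^i{}_j{}^k{}_l) = R^{σk}{}_{σl}{}^{σi}{}_{σj}`. -/
def RealTypeII (n : ℕ) (R : Fin n → Fin n → Fin n → Fin n → ℂ)
    (σ : Fin n → Fin n) : Prop :=
  ∀ i j k l, conj (R i j k l) = R (σ k) (σ l) (σ i) (σ j)

/-- `R` is of antireal type II w.r.t. the involution `σ`: `R` invertible and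
`conj (R^i{}_j{}^k{}_l) = (R⁻¹)^{σi}{}_{σj}{}^{σk}{}_{σl}`. -/
def AntirealTypeII (n : ℕ) (R : Fin n → Fin n → Fin n → Fin n → ℂ)
    (σ : Fin n → Fin n) : Prop :=
  IsUnit (toMat n R) ∧
    ∀ i j k l, conj (R i j k l) = invEntry n R (σ i) (σ j) (σ k) (σ l)

/-- The metric `η` (entries `η^{ij} = η i j`) is `R`-covariant:
`Σ η^{ia} η^{jb} R^k{}_a{}^l{}_b = Σ R^i{}_a{}^j{}_b η^{ak} η^{bl}`. -/
def MetricCovariant (n : ℕ) (R : Fin n → Fin n → Fin n → Fin n → ℂ)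
    (η : Matrix (Fin n) (Fin n) ℂ) : Prop :=
  ∀ i j k l, (∑ a : Fin n, ∑ b : Fin n, η i a * η j b * R k a l b) =
    ∑ a : Fin n, ∑ b : Fin n, R i a j b * η a k * η b l

/-- The metric `η` is real: `conj (η^{ij}) = η_{ji}`, where the lower-index entries
`η_{ij}` are those of the transposed inverse, i.e. `η_{ji} = (η⁻¹) i j`. -/
def MetricReal (n : ℕ) (η : Matrix (Fin n) (Fin n) ℂ) : Prop :=
  ∀ i j, conj (η i j) = η⁻¹ i j

/-- The relations `x_i x_j = Σ_{a,b} R'^a{}_i{}^b{}_j x_b x_a` of the braided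
covector algebra, as a relation on the free algebra. -/
inductive CovRel (n : ℕ) (R' : Fin n → Fin n → Fin n → Fin n → ℂ) :
    FreeAlgebra ℂ (Fin n) → FreeAlgebra ℂ (Fin n) → Prop
  | rel (i j : Fin n) :
      CovRel n R' (FreeAlgebra.ι ℂ i * FreeAlgebra.ι ℂ j)
        (∑ a : Fin n, ∑ b : Fin n,
          R' a i b j • (FreeAlgebra.ι ℂ b * FreeAlgebra.ι ℂ a))

/-- The braided covector algebra `V̌(R',R)`: the free algebra on `x_1,…,x_n` modulo
the two-sided ideal generated by `x_i x_j − Σ R'^a{}_i{}^b{}_j x_b x_a`. -/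
abbrev CovAlg (n : ℕ) (R' : Fin n → Fin n → Fin n → Fin n → ℂ) :=
  RingQuot (CovRel n R')

/-- The generator `x_i` of the braided covector algebra. -/
def xg (n : ℕ) (R' : Fin n → Fin n → Fin n → Fin n → ℂ) (i : Fin n) :
    CovAlg n R' :=
  RingQuot.mkAlgHom ℂ (CovRel n R') (FreeAlgebra.ι ℂ i)

/-- The relations `v^i v^j = Σ_{a,b} R'^i{}_a{}^j{}_b v^b v^a` of the braided
vector algebra, as a relation on the free algebra. -/
inductive VecRel (n : ℕ) (R' : Fin n → Fin n → Fin n → Fin n → ℂ) :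
    FreeAlgebra ℂ (Fin n) → FreeAlgebra ℂ (Fin n) → Prop
  | rel (i j : Fin n) :
      VecRel n R' (FreeAlgebra.ι ℂ i * FreeAlgebra.ι ℂ j)
        (∑ a : Fin n, ∑ b : Fin n,
          R' i a j b • (FreeAlgebra.ι ℂ b * FreeAlgebra.ι ℂ a))

/-- The braided vector algebra `V(R',R)`: the free algebra on `v^1,…,v^n` modulo
the two-sided ideal generated by `v^i v^j − Σ R'^i{}_a{}^j{}_b v^b v^a`. -/
abbrev VecAlg (n : ℕ) (R' : Fin n → Fin n → Fin n → Fin n → ℂ) :=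
  RingQuot (VecRel n R')

/-- The generator `v^i` of the braided vector algebra. -/
def vg (n : ℕ) (R' : Fin n → Fin n → Fin n → Fin n → ℂ) (i : Fin n) :
    VecAlg n R' :=
  RingQuot.mkAlgHom ℂ (VecRel n R') (FreeAlgebra.ι ℂ i)

/-- The relations of the braided tensor square of the braided covector algebra:
generators `x_i = ι (inl i)`, `y_i = ι (inr i)`, with `x`- and `y`-relations from
`R'` and cross relations `y_i x_j = Σ_{a,b} R^a{}_i{}^b{}_j x_b y_a`. -/
inductive SqRel (n : ℕ) (R' R : Fin n → Fin n → Fin n → Fin n → ℂ) :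
    FreeAlgebra ℂ (Fin n ⊕ Fin n) → FreeAlgebra ℂ (Fin n ⊕ Fin n) → Prop
  | xx (i j : Fin n) :
      SqRel n R' R (FreeAlgebra.ι ℂ (Sum.inl i) * FreeAlgebra.ι ℂ (Sum.inl j))
        (∑ a : Fin n, ∑ b : Fin n, R' a i b j •
          (FreeAlgebra.ι ℂ (Sum.inl b) * FreeAlgebra.ι ℂ (Sum.inl a)))
  | yy (i j : Fin n) :
      SqRel n R' R (FreeAlgebra.ι ℂ (Sum.inr i) * FreeAlgebra.ι ℂ (Sum.inr j))
        (∑ a : Fin n, ∑ b : Fin n, R' a i b j •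
          (FreeAlgebra.ι ℂ (Sum.inr b) * FreeAlgebra.ι ℂ (Sum.inr a)))
  | yx (i j : Fin n) :
      SqRel n R' R (FreeAlgebra.ι ℂ (Sum.inr i) * FreeAlgebra.ι ℂ (Sum.inl j))
        (∑ a : Fin n, ∑ b : Fin n, R a i b j •
          (FreeAlgebra.ι ℂ (Sum.inl b) * FreeAlgebra.ι ℂ (Sum.inr a)))

/-- The braided tensor square `B` of the braided covector algebra. -/
abbrev SqAlg (n : ℕ) (R' R : Fin n → Fin n → Fin n → Fin n → ℂ) :=
  RingQuot (SqRel n R' R)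

/-- The generator `x_i` of the braided tensor square. -/
def Xg (n : ℕ) (R' R : Fin n → Fin n → Fin n → Fin n → ℂ) (i : Fin n) :
    SqAlg n R' R :=
  RingQuot.mkAlgHom ℂ (SqRel n R' R) (FreeAlgebra.ι ℂ (Sum.inl i))

/-- The generator `y_i` of the braided tensor square. -/
def Yg (n : ℕ) (R' R : Fin n → Fin n → Fin n → Fin n → ℂ) (i : Fin n) :
    SqAlg n R' R :=
  RingQuot.mkAlgHom ℂ (SqRel n R' R) (FreeAlgebra.ι ℂ (Sum.inr i))

/-- A conjugate-linear, antimultiplicative, unital map between ℂ-algebras. -/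
def IsConjLinearAntiHom {A B : Type*} [Semiring A] [Algebra ℂ A]
    [Semiring B] [Algebra ℂ B] (f : A → B) : Prop :=
  (∀ a b : A, f (a + b) = f a + f b) ∧
  (∀ (c : ℂ) (a : A), f (c • a) = (starRingEnd ℂ) c • f a) ∧
  (∀ a b : A, f (a * b) = f b * f a) ∧
  f 1 = 1

/-- A star structure on a ℂ-algebra: a conjugate-linear, antimultiplicative,
unital, involutive map. -/
def IsStarStructure {A : Type*} [Semiring A] [Algebra ℂ A] (f : A → A) : Prop :=
  (∀ a b : A, f (a + b) = f a + f b) ∧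
  (∀ (c : ℂ) (a : A), f (c • a) = (starRingEnd ℂ) c • f a) ∧
  (∀ a b : A, f (a * b) = f b * f a) ∧
  f 1 = 1 ∧
  (∀ a : A, f (f a) = a)

namespace Stmt1Aux

open MulOpposite

/-- The defining relation of the braided vector algebra, realized in the quotient. -/
lemma vrel {n : ℕ} (R' : Fin n → Fin n → Fin n → Fin n → ℂ) (i j : Fin n) :
    vg n R' i * vg n R' j =
      ∑ a : Fin n, ∑ b : Fin n, R' i a j b • (vg n R' b * vg n R' a) := by
  have h := RingQuot.mkAlgHom_rel ℂ (VecRel.rel (n := n) (R' := R') i j)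
  simp only [map_mul, map_sum, map_smul] at h
  exact h

lemma vrel_pair {n : ℕ} (R' : Fin n → Fin n → Fin n → Fin n → ℂ) (p : Fin n × Fin n) :
    vg n R' p.1 * vg n R' p.2 =
      ∑ q : Fin n × Fin n, toMat n R' p q • (vg n R' q.2 * vg n R' q.1) := by
  rw [Fintype.sum_prod_type]
  exact vrel R' p.1 p.2

lemma inv_rel {n : ℕ} (R' : Fin n → Fin n → Fin n → Fin n → ℂ)
    (hU : IsUnit (toMat n R')) (k l : Fin n) :
    (∑ a : Fin n, ∑ b : Fin n, invEntry n R' k a l b • (vg n R' a * vg n R' b)) =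
      vg n R' l * vg n R' k := by
  have hNM : (toMat n R')⁻¹ * toMat n R' = 1 :=
    Matrix.nonsing_inv_mul _ ((Matrix.isUnit_iff_isUnit_det _).mp hU)
  have step1 : (∑ a : Fin n, ∑ b : Fin n, invEntry n R' k a l b • (vg n R' a * vg n R' b)) =
      ∑ p : Fin n × Fin n, (toMat n R')⁻¹ (k, l) p • (vg n R' p.1 * vg n R' p.2) := by
    rw [Fintype.sum_prod_type]; rfl
  rw [step1]
  calc ∑ p : Fin n × Fin n, (toMat n R')⁻¹ (k, l) p • (vg n R' p.1 * vg n R' p.2)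
      = ∑ p : Fin n × Fin n, ∑ q : Fin n × Fin n,
          ((toMat n R')⁻¹ (k, l) p * toMat n R' p q) • (vg n R' q.2 * vg n R' q.1) := by
        refine Finset.sum_congr rfl fun p _ => ?_
        rw [vrel_pair R' p, Finset.smul_sum]
        exact Finset.sum_congr rfl fun q _ => smul_smul _ _ _
    _ = ∑ q : Fin n × Fin n, (((toMat n R')⁻¹ * toMat n R') (k, l) q) •
          (vg n R' q.2 * vg n R' q.1) := by
        rw [Finset.sum_comm]
        refine Finset.sum_congr rfl fun q _ => ?_
        rw [Matrix.mul_apply, Finset.sum_smul]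
    _ = vg n R' l * vg n R' k := by
        rw [hNM]
        simp [Matrix.one_apply, ite_smul, Finset.sum_ite_eq]

/-- The key compatibility identity. -/
lemma key {n : ℕ} {R' : Fin n → Fin n → Fin n → Fin n → ℂ}
    {σ : Fin n → Fin n} (hσ : Function.Involutive σ)
    (hR' : RealTypeII n R' σ ∨ AntirealTypeII n R' σ) (i j : Fin n) :
    vg n R' (σ j) * vg n R' (σ i) =
      ∑ a : Fin n, ∑ b : Fin n,
        (starRingEnd ℂ) (R' i a j b) • (vg n R' (σ a) * vg n R' (σ b)) := by
  have hreindex : ∀ (F : Fin n → Fin n → VecAlg n R'),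
      (∑ a : Fin n, ∑ b : Fin n, F (σ a) (σ b)) = ∑ a : Fin n, ∑ b : Fin n, F a b := by
    intro F
    let e : Equiv.Perm (Fin n) := ⟨σ, σ, hσ.leftInverse, hσ.rightInverse⟩
    calc (∑ a : Fin n, ∑ b : Fin n, F (σ a) (σ b))
        = ∑ a : Fin n, ∑ b : Fin n, F (σ a) b :=
          Finset.sum_congr rfl fun a _ => Equiv.sum_comp e (F (σ a))
      _ = ∑ a : Fin n, ∑ b : Fin n, F a b :=
          Equiv.sum_comp e (fun a => ∑ b : Fin n, F a b)
  rcases hR' with hR' | hR'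
  · have hconj : ∀ a b, (starRingEnd ℂ) (R' i a j b) = R' (σ j) (σ b) (σ i) (σ a) :=
      fun a b => hR' i a j b ▸ rfl
    calc vg n R' (σ j) * vg n R' (σ i)
        = ∑ a : Fin n, ∑ b : Fin n, R' (σ j) a (σ i) b • (vg n R' b * vg n R' a) :=
          vrel R' (σ j) (σ i)
      _ = ∑ b : Fin n, ∑ a : Fin n, R' (σ j) a (σ i) b • (vg n R' b * vg n R' a) :=
          Finset.sum_comm
      _ = ∑ a : Fin n, ∑ b : Fin n, R' (σ j) b (σ i) a • (vg n R' a * vg n R' b) := rfl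
      _ = ∑ a : Fin n, ∑ b : Fin n,
            R' (σ j) (σ b) (σ i) (σ a) • (vg n R' (σ a) * vg n R' (σ b)) :=
          (hreindex fun a b => R' (σ j) b (σ i) a • (vg n R' a * vg n R' b)).symm
      _ = ∑ a : Fin n, ∑ b : Fin n,
            (starRingEnd ℂ) (R' i a j b) • (vg n R' (σ a) * vg n R' (σ b)) := by
          simp only [hconj]
  · obtain ⟨hU, hc⟩ := hR'
    calc vg n R' (σ j) * vg n R' (σ i)
        = ∑ a : Fin n, ∑ b : Fin n,
            invEntry n R' (σ i) a (σ j) b • (vg n R' a * vg n R' b) :=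
          (inv_rel R' hU (σ i) (σ j)).symm
      _ = ∑ a : Fin n, ∑ b : Fin n,
            invEntry n R' (σ i) (σ a) (σ j) (σ b) • (vg n R' (σ a) * vg n R' (σ b)) :=
          (hreindex fun a b => invEntry n R' (σ i) a (σ j) b • (vg n R' a * vg n R' b)).symm
      _ = ∑ a : Fin n, ∑ b : Fin n,
            (starRingEnd ℂ) (R' i a j b) • (vg n R' (σ a) * vg n R' (σ b)) := by
          simp only [← hc]

/-- Type synonym: the opposite algebra with conjugated scalar action. -/
def Cop (B : Type*) : Type _ := Bᵐᵒᵖ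

instance {B : Type*} [Semiring B] : Semiring (Cop B) := inferInstanceAs (Semiring Bᵐᵒᵖ)

noncomputable instance {B : Type*} [Semiring B] [Algebra ℂ B] : Algebra ℂ (Cop B) :=
  RingHom.toAlgebra'
    (show ℂ →+* Cop B from (algebraMap ℂ Bᵐᵒᵖ).comp (starRingEnd ℂ))
    (fun c x => Algebra.commutes (A := Bᵐᵒᵖ) ((starRingEnd ℂ) c) x)

def Cop.op {B : Type*} : B → Cop B := MulOpposite.op
def Cop.unop {B : Type*} : Cop B → B := MulOpposite.unop

variable {B : Type*} [Semiring B] [Algebra ℂ B]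

lemma Cop.unop_op (b : B) : Cop.unop (Cop.op b) = b := rfl
lemma Cop.op_mul (a b : B) : (Cop.op a) * (Cop.op b) = Cop.op (b * a) := rfl
lemma Cop.unop_mul (a b : Cop B) : Cop.unop (a * b) = Cop.unop b * Cop.unop a := rfl
lemma Cop.unop_add (a b : Cop B) : Cop.unop (a + b) = Cop.unop a + Cop.unop b := rfl
lemma Cop.unop_one : Cop.unop (1 : Cop B) = 1 := rfl

lemma Cop.algebraMap_eq (c : ℂ) :
    algebraMap ℂ (Cop B) c = Cop.op (algebraMap ℂ B ((starRingEnd ℂ) c)) := rfl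

def Cop.opAddHom (B : Type*) [Semiring B] : B →+ Cop B :=
  { toFun := Cop.op, map_zero' := rfl, map_add' := fun _ _ => rfl }

lemma Cop.op_sum {ι : Type*} (s : Finset ι) (f : ι → B) :
    Cop.op (∑ i ∈ s, f i) = ∑ i ∈ s, Cop.op (f i) :=
  map_sum (Cop.opAddHom B) f s

lemma Cop.algebraMap_mul (c : ℂ) (z : Cop B) :
    algebraMap ℂ (Cop B) c * z = Cop.op ((starRingEnd ℂ) c • Cop.unop z) := by
  show MulOpposite.op (MulOpposite.unop z * algebraMap ℂ B ((starRingEnd ℂ) c)) = _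
  rw [← Algebra.commutes, ← Algebra.smul_def]
  rfl

end Stmt1Aux
/-- if `R'` is of real or antireal type II w.r.t. an involution `σ`,
the braided vector algebra `V(R',R)` admits a unique star structure with
`(v^i)* = v^{σ(i)}`. -/
theorem stmt1 (n : ℕ) (hn : 1 ≤ n)
    (R R' : Fin n → Fin n → Fin n → Fin n → ℂ)
    (σ : Fin n → Fin n) (hσ : Function.Involutive σ)
    (hR' : RealTypeII n R' σ ∨ AntirealTypeII n R' σ) :
    ∃! f : VecAlg n R' → VecAlg n R',
      IsStarStructure f ∧ ∀ i : Fin n, f (vg n R' i) = vg n R' (σ i) := by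
  classical
  open Stmt1Aux in
  -- the anti-homomorphism on the free algebra
  let F : FreeAlgebra ℂ (Fin n) →ₐ[ℂ] Stmt1Aux.Cop (VecAlg n R') :=
    FreeAlgebra.lift ℂ fun i => Stmt1Aux.Cop.op (vg n R' (σ i))
  have hFι : ∀ i, F (FreeAlgebra.ι ℂ i) = Stmt1Aux.Cop.op (vg n R' (σ i)) := fun i =>
    FreeAlgebra.lift_ι_apply _ _
  have hFsmul : ∀ (c : ℂ) (x : FreeAlgebra ℂ (Fin n)),
      F (c • x) = Stmt1Aux.Cop.op ((starRingEnd ℂ) c • Stmt1Aux.Cop.unop (F x)) := by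
    intro c x
    rw [Algebra.smul_def, map_mul, AlgHom.commutes, Stmt1Aux.Cop.algebraMap_mul]
  have hrel : ∀ ⦃x y : FreeAlgebra ℂ (Fin n)⦄, VecRel n R' x y → F x = F y := by
    rintro x y ⟨i, j⟩
    rw [map_mul, hFι, hFι, Stmt1Aux.Cop.op_mul, map_sum]
    have : ∀ a : Fin n,
        F (∑ b : Fin n, R' i a j b • (FreeAlgebra.ι ℂ b * FreeAlgebra.ι ℂ a)) =
          Stmt1Aux.Cop.op (∑ b : Fin n,
            (starRingEnd ℂ) (R' i a j b) • (vg n R' (σ a) * vg n R' (σ b))) := by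
      intro a
      rw [map_sum, Stmt1Aux.Cop.op_sum]
      refine Finset.sum_congr rfl fun b _ => ?_
      rw [hFsmul, map_mul, hFι, hFι, Stmt1Aux.Cop.op_mul, Stmt1Aux.Cop.unop_op]
    simp only [this]
    rw [← Stmt1Aux.Cop.op_sum]
    exact congrArg Stmt1Aux.Cop.op (Stmt1Aux.key hσ hR' i j)
  let G : VecAlg n R' →+* Stmt1Aux.Cop (VecAlg n R') :=
    RingQuot.lift ⟨F.toRingHom, hrel⟩
  let f : VecAlg n R' → VecAlg n R' := fun a => Stmt1Aux.Cop.unop (G a)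
  have hmk : ∀ x : FreeAlgebra ℂ (Fin n),
      G (RingQuot.mkAlgHom ℂ (VecRel n R') x) = F x := by
    intro x
    have h1 : RingQuot.mkAlgHom ℂ (VecRel n R') x = RingQuot.mkRingHom (VecRel n R') x := by
      rw [← RingQuot.mkAlgHom_coe ℂ]; rfl
    rw [h1]
    exact RingQuot.lift_mkRingHom_apply _ hrel x
  have hfv : ∀ i, f (vg n R' i) = vg n R' (σ i) := by
    intro i
    show Stmt1Aux.Cop.unop (G (RingQuot.mkAlgHom ℂ (VecRel n R') (FreeAlgebra.ι ℂ i))) = _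
    rw [hmk, hFι, Stmt1Aux.Cop.unop_op]
  have hadd : ∀ a b, f (a + b) = f a + f b := fun a b => by
    show Stmt1Aux.Cop.unop (G (a + b)) = _
    rw [map_add, Stmt1Aux.Cop.unop_add]
  have hmul : ∀ a b, f (a * b) = f b * f a := fun a b => by
    show Stmt1Aux.Cop.unop (G (a * b)) = _
    rw [map_mul, Stmt1Aux.Cop.unop_mul]
  have hone : f 1 = 1 := by
    show Stmt1Aux.Cop.unop (G 1) = 1
    rw [map_one, Stmt1Aux.Cop.unop_one]
  have hsmul : ∀ (c : ℂ) (a : VecAlg n R'), f (c • a) = (starRingEnd ℂ) c • f a := by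
    intro c a
    obtain ⟨x, rfl⟩ := RingQuot.mkAlgHom_surjective ℂ (VecRel n R') a
    have h1 : c • (RingQuot.mkAlgHom ℂ (VecRel n R')) x =
        (RingQuot.mkAlgHom ℂ (VecRel n R')) (c • x) := (map_smul _ _ _).symm
    rw [h1]
    show Stmt1Aux.Cop.unop (G ((RingQuot.mkAlgHom ℂ (VecRel n R')) (c • x))) =
      (starRingEnd ℂ) c • Stmt1Aux.Cop.unop (G ((RingQuot.mkAlgHom ℂ (VecRel n R')) x))
    rw [hmk, hmk, hFsmul, Stmt1Aux.Cop.unop_op]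
  -- an algebra endomorphism fixing the generators is the identity
  have endo_eq : ∀ (φ : VecAlg n R' → VecAlg n R'),
      (∀ a b, φ (a + b) = φ a + φ b) → (∀ (c : ℂ) a, φ (c • a) = c • φ a) →
      (∀ a b, φ (a * b) = φ a * φ b) → φ 1 = 1 →
      (∀ i, φ (vg n R' i) = vg n R' i) → ∀ a, φ a = a := by
    intro φ φadd φsmul φmul φone φgen a
    have φzero : φ 0 = 0 := by
      have h := φadd 0 0
      rw [add_zero] at h
      exact (left_eq_add.mp h)
    let Φ : VecAlg n R' →ₐ[ℂ] VecAlg n R' :=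
      AlgHom.mk' { toFun := φ, map_one' := φone, map_mul' := φmul,
                   map_zero' := φzero, map_add' := φadd } φsmul
    have : Φ = AlgHom.id ℂ (VecAlg n R') := by
      refine RingQuot.ringQuot_ext' ℂ _ _ ?_
      refine FreeAlgebra.hom_ext ?_
      funext i
      show Φ (RingQuot.mkAlgHom ℂ (VecRel n R') (FreeAlgebra.ι ℂ i)) =
        RingQuot.mkAlgHom ℂ (VecRel n R') (FreeAlgebra.ι ℂ i)
      exact φgen i
    exact DFunLike.congr_fun this a
  have hinv : ∀ a, f (f a) = a := by
    refine endo_eq (fun a => f (f a))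
      (fun a b => by show f (f (a + b)) = f (f a) + f (f b); rw [hadd, hadd])
      (fun c a => by show f (f (c • a)) = c • f (f a); rw [hsmul, hsmul, Complex.conj_conj])
      (fun a b => by show f (f (a * b)) = f (f a) * f (f b); rw [hmul, hmul])
      (by show f (f 1) = 1; rw [hone, hone])
      (fun i => by show f (f (vg n R' i)) = vg n R' i; rw [hfv, hfv, hσ i])
  refine ⟨f, ⟨⟨hadd, hsmul, hmul, hone, hinv⟩, hfv⟩, ?_⟩
  rintro g ⟨⟨gadd, gsmul, gmul, gone, ginv⟩, hg⟩
  have gzero : g 0 = 0 := by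
    have h := gadd 0 0
    rw [add_zero] at h
    exact (left_eq_add.mp h)
  have hgf : ∀ a, g (f a) = a := by
    refine endo_eq (fun a => g (f a))
      (fun a b => by show g (f (a + b)) = g (f a) + g (f b); rw [hadd, gadd])
      (fun c a => by show g (f (c • a)) = c • g (f a); rw [hsmul, gsmul, Complex.conj_conj])
      (fun a b => by show g (f (a * b)) = g (f a) * g (f b); rw [hmul, gmul])
      (by show g (f 1) = 1; rw [hone, gone])
      (fun i => by show g (f (vg n R' i)) = vg n R' i; rw [hfv, hg, hσ i])
  funext a
  calc g a = g (f (f a)) := by rw [hinv a]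
    _ = f a := hgf (f a)
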